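/- If gcd(r,n) = 1 and a ∈ F_{q^n}^*, then (-a)^{(q^{rn}-1)/(q^r-1)} = (-1)^n a^{(q^n-1)/(q-1)}, where the left side is computed in F_{q^{rn}} ⊇ F_{q^n}. -/

import Mathlib

open Finset

/-- Reindexing a sum over `range n` along the bijection `j ↦ r * j % n`
(bijective since `gcd r n = 1`). -/
lemma sum_mod_perm_aux (n r : ℕ) (hn : 0 < n) (hco : Nat.gcd r n = 1) (q : ℕ) :
    ∑ j ∈ range n, q ^ (r * j % n) = ∑ i ∈ range n, q ^ i := by
  have hinj : ∀ x ∈ range n, ∀ y ∈ range n, r * x % n = r * y % n → x = y := by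
    intro x hx y hy h
    have hxy : x ≡ y [MOD n] :=
      Nat.ModEq.cancel_left_of_coprime (by rwa [Nat.gcd_comm]) h
    simp only [mem_range] at hx hy
    rwa [Nat.ModEq, Nat.mod_eq_of_lt hx, Nat.mod_eq_of_lt hy] at hxy
  have himg : Finset.image (fun j => r * j % n) (range n) = range n := by
    apply Finset.eq_of_subset_of_card_le
    · intro x hx
      simp only [mem_image, mem_range] at hx ⊢
      obtain ⟨j, _, rfl⟩ := hx
      exact Nat.mod_lt _ hn
    · rw [Finset.card_image_of_injOn (fun x hx y hy h => hinj x hx y hy h)]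
  calc ∑ j ∈ range n, q ^ (r * j % n)
      = ∑ i ∈ Finset.image (fun j => r * j % n) (range n), q ^ i :=
        (Finset.sum_image hinj).symm
    _ = ∑ i ∈ range n, q ^ i := by rw [himg]

/-- If `gcd(r,n) = 1` and `a ∈ F_{q^n}^*`, then
`(-a)^{(q^{rn}-1)/(q^r-1)} = (-1)^n a^{(q^n-1)/(q-1)}`, the left side computed in
`F_{q^{rn}} ⊇ F_{q^n}`. -/
theorem stmt_10 (q n r : ℕ) (hq : IsPrimePow q) (hn : 0 < n) (hr : 0 < r)
    (hco : Nat.gcd r n = 1)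
    (K L : Type*) [Field K] [Field L] [Fintype K] [Fintype L] [Algebra K L]
    (hK : Fintype.card K = q ^ n) (hL : Fintype.card L = q ^ (r * n))
    (a : K) (ha : a ≠ 0) :
    (-(algebraMap K L a)) ^ ((q ^ (r * n) - 1) / (q ^ r - 1)) =
      algebraMap K L ((-1) ^ n * a ^ ((q ^ n - 1) / (q - 1))) := by
  have hq2 : 2 ≤ q := hq.two_le
  set N := (q ^ (r * n) - 1) / (q ^ r - 1) with hNdef
  set M := (q ^ n - 1) / (q - 1) with hMdef
  have hqn1 : 1 ≤ q ^ n := Nat.one_le_pow _ _ (by omega)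
  have hqr2 : 2 ≤ q ^ r := by
    calc 2 ≤ q := hq2
    _ = q ^ 1 := (pow_one q).symm
    _ ≤ q ^ r := Nat.pow_le_pow_right (by omega) hr
  -- express the exponents as geometric sums
  have hN : N = ∑ j ∈ range n, q ^ (r * j) := by
    rw [hNdef, show q ^ (r * n) = (q ^ r) ^ n from pow_mul q r n,
      ← Nat.geomSum_eq hqr2 n]
    exact Finset.sum_congr rfl fun j _ => by rw [← pow_mul]
  have hM : M = ∑ i ∈ range n, q ^ i := by
    rw [hMdef, ← Nat.geomSum_eq hq2]
  set c := q ^ n - 1 with hc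
  -- q^m ≡ q^(m % n) mod c
  have hqn : q ^ n ≡ 1 [MOD c] := by
    symm
    rw [Nat.modEq_iff_dvd' hqn1]
  have hpow : ∀ m : ℕ, q ^ m ≡ q ^ (m % n) [MOD c] := by
    intro m
    conv_lhs => rw [← Nat.div_add_mod m n]
    rw [pow_add, pow_mul]
    calc (q ^ n) ^ (m / n) * q ^ (m % n)
        ≡ 1 ^ (m / n) * q ^ (m % n) [MOD c] := Nat.ModEq.mul_right _ (hqn.pow _)
      _ = q ^ (m % n) := by rw [one_pow, one_mul]
  -- N ≡ M mod c
  have hmod : N ≡ M [MOD c] := by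
    rw [hN, hM, ← sum_mod_perm_aux n r hn hco q]
    unfold Nat.ModEq
    rw [Finset.sum_nat_mod, Finset.sum_nat_mod (range n) c (fun j => q ^ (r * j % n))]
    congr 1
    exact Finset.sum_congr rfl fun j _ => hpow (r * j)
  -- a^N = a^M in K
  have haNM : a ^ N = a ^ M := by
    classical
    set u : Kˣ := Units.mk0 a ha with hu
    have hcard : Fintype.card Kˣ = c := by rw [Fintype.card_units, hK]
    have huc : u ^ c = 1 := by rw [← hcard]; exact pow_card_eq_one
    have hd : orderOf u ∣ c := orderOf_dvd_of_pow_eq_one huc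
    have huNM : u ^ N = u ^ M := pow_eq_pow_iff_modEq.mpr (hmod.of_dvd hd)
    have := congrArg (Units.val) huNM
    simpa [hu] using this
  -- (-1)^N = (-1)^n in K
  have hsign : ((-1 : K)) ^ N = (-1 : K) ^ n := by
    rcases Nat.even_or_odd q with hqe | hqo
    · -- q even: the characteristic is 2, so -1 = 1
      obtain ⟨p, k, hp, hk, rfl⟩ := hq
      have hp2 : p = 2 := by
        have h2 : (2 : ℕ) ∣ p ^ k := hqe.two_dvd
        have := (Nat.Prime.dvd_of_dvd_pow Nat.prime_two h2)
        exact ((Nat.prime_dvd_prime_iff_eq Nat.prime_two hp.nat_prime).mp this).symm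
      subst hp2
      have hq0 : ((2 : ℕ) ^ k : K) = 0 := by
        have h0 : (((2 : ℕ) ^ k : K)) ^ n = 0 := by
          rw [← Nat.cast_pow, ← Nat.cast_pow, ← hK, Nat.cast_card_eq_zero]
        exact pow_eq_zero_iff (by omega : n ≠ 0) |>.mp h0
      have h20 : ((2 : ℕ) : K) = 0 :=
        pow_eq_zero_iff (by omega : k ≠ 0) |>.mp hq0
      have h2 : (2 : K) = 0 := by exact_mod_cast h20
      have hneg : (-1 : K) = 1 := by linear_combination -h2
      rw [hneg, one_pow, one_pow]
    · -- q odd: N ≡ n mod 2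
      have hNn : N % 2 = n % 2 := by
        rw [hN, Finset.sum_nat_mod]
        have hodd : ∀ j ∈ range n, q ^ (r * j) % 2 = 1 := fun j _ =>
          Nat.odd_iff.mp (hqo.pow)
        rw [Finset.sum_congr rfl hodd, Finset.sum_const, card_range, smul_eq_mul,
          mul_one]
      rcases Nat.even_or_odd n with he | ho
      · have heN : Even N := Nat.even_iff.mpr (by rw [hNn]; exact Nat.even_iff.mp he)
        rw [heN.neg_one_pow, he.neg_one_pow]
      · have hoN : Odd N := Nat.odd_iff.mpr (by rw [hNn]; exact Nat.odd_iff.mp ho)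
        rw [hoN.neg_one_pow, ho.neg_one_pow]
  -- assemble
  have key : (-a) ^ N = (-1 : K) ^ n * a ^ M := by
    rw [neg_pow, hsign, haNM]
  calc (-(algebraMap K L a)) ^ N = algebraMap K L ((-a) ^ N) := by
        rw [map_pow, map_neg]
    _ = algebraMap K L ((-1) ^ n * a ^ M) := by rw [key]
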